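/- Let f : ℕ → ℕ be computable and suppose f(n)/n computably converges to ∞, i.e., there is a computable function K ↦ n_K such that f(n) ≥ K·n for all n ≥ n_K. Then f is manageable. -/

import Mathlib

open scoped BigOperators

/-- Finite sums of primrec functions are primrec. -/
private lemma primrec_finsum {α : Type*} [Primcodable α] :
    ∀ {k : ℕ} {g : Fin k → α → ℕ}, (∀ i, Primrec (g i)) →
      Primrec fun a => ∑ i, g i a := by
  intro k
  induction k with
  | zero => intro g _; simpa using Primrec.const 0
  | succ k ih =>
    intro g hg
    have : Primrec fun a => g 0 a + ∑ i : Fin k, g i.succ a :=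
      Primrec.nat_add.comp (hg 0) (ih fun i => hg i.succ)
    exact this.of_eq fun a => by rw [Fin.sum_univ_succ]

private lemma primrec_pow_const (c : ℕ) : Primrec fun n : ℕ => n ^ c := by
  induction c with
  | zero => simpa using Primrec.const 1
  | succ c ih =>
    exact (Primrec.nat_mul.comp ih Primrec.id).of_eq fun n => (pow_succ n c).symm

/-- Unfolding a `Nat.rec` boolean "or" fold as a bounded existential. -/
private lemma natrec_or_eq_true (c : ℕ → Bool) :
    ∀ M : ℕ, (Nat.rec (motive := fun _ => Bool) false (fun m b => b || c m) M = true
      ↔ ∃ m < M, c m = true) := by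
  intro M
  induction M with
  | zero => simp
  | succ M ih =>
    simp only [Nat.lt_succ_iff_lt_or_eq]
    constructor
    · intro h
      rcases Bool.or_eq_true_iff.1 h with h | h
      · rcases ih.1 h with ⟨m, hm, hc⟩; exact ⟨m, Or.inl hm, hc⟩
      · exact ⟨M, Or.inr rfl, h⟩
    · rintro ⟨m, hm | rfl, hc⟩
      · exact Bool.or_eq_true_iff.2 (Or.inl (ih.2 ⟨m, hm, hc⟩))
      · exact Bool.or_eq_true_iff.2 (Or.inr hc)

/-- Base-`b` digit extraction: bound and digits of `∑ x j * b ^ j`. -/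
private lemma digits_lemma (b : ℕ) (hb : 0 < b) :
    ∀ {k : ℕ} (x : Fin k → ℕ), (∀ i, x i < b) →
      (∑ j, x j * b ^ (j : ℕ)) < b ^ k ∧
      ∀ i : Fin k, (∑ j, x j * b ^ (j : ℕ)) / b ^ (i : ℕ) % b = x i := by
  intro k
  induction k with
  | zero => intro x _; exact ⟨by simp, fun i => i.elim0⟩
  | succ k ih =>
    intro x hx
    have hsum : (∑ j, x j * b ^ (j : ℕ))
        = x 0 + b * ∑ j : Fin k, x j.succ * b ^ (j : ℕ) := by
      rw [Fin.sum_univ_succ]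
      simp only [Fin.val_zero, pow_zero, mul_one, Fin.val_succ, Finset.mul_sum]
      congr 1
      refine Finset.sum_congr rfl fun j _ => ?_
      ring
    obtain ⟨hlt, hdig⟩ := ih (fun j => x j.succ) (fun j => hx j.succ)
    set t := ∑ j : Fin k, x j.succ * b ^ (j : ℕ) with ht
    constructor
    · rw [hsum]
      calc x 0 + b * t < b + b * t := by have := hx 0; omega
        _ = b * (t + 1) := by ring
        _ ≤ b * b ^ k := Nat.mul_le_mul_left b (by omega)
        _ = b ^ (k + 1) := by rw [pow_succ, Nat.mul_comm]
    · intro i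
      rw [hsum]
      refine Fin.cases ?_ (fun i' => ?_) i
      · simp only [Fin.val_zero, pow_zero, Nat.div_one]
        rw [Nat.add_mul_mod_self_left, Nat.mod_eq_of_lt (hx 0)]
      · have hcast : ((i'.succ : Fin (k+1)) : ℕ) = (i' : ℕ) + 1 := rfl
        rw [hcast, pow_succ', ← Nat.div_div_eq_div_mul, Nat.add_mul_div_left _ _ hb,
          Nat.div_eq_of_lt (hx 0), zero_add]
        exact hdig i'

/-- Manageability for `ℕ`-valued functions: there is an algorithm which, given
`A₀, A₁, …, A_k ∈ ℕ \ {0}` and `B₀, B₁, …, B_k ∈ ℕ`, decides whether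
`f(A₀ + x₁A₁ + ⋯ + x_kA_k) < B₀ + x₁B₁ + ⋯ + x_kB_k` holds for some `x₁, …, x_k ∈ ℕ`. -/
def ManageableNat (f : ℕ → ℕ) : Prop :=
  ∀ k : ℕ, ∃ dec : (ℕ × (Fin k → ℕ)) × (ℕ × (Fin k → ℕ)) → Bool,
    Computable dec ∧
    ∀ (A₀ : ℕ) (A : Fin k → ℕ) (B₀ : ℕ) (B : Fin k → ℕ),
      0 < A₀ → (∀ i, 0 < A i) →
      (dec ((A₀, A), (B₀, B)) = true ↔
        ∃ x : Fin k → ℕ,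
          f (A₀ + ∑ i, x i * A i) < B₀ + ∑ i, x i * B i)

/-- If `f` is computable and `f(n)/n` computably converges to `∞` (witnessed by a computable
function `K ↦ n_K` with `f(n) ≥ K·n` for all `n ≥ n_K`), then `f` is manageable. -/
theorem stmt_3 (f : ℕ → ℕ) (hf : Computable f)
    (nK : ℕ → ℕ) (hnK : Computable nK)
    (h : ∀ K n : ℕ, nK K ≤ n → K * n ≤ f n) :
    ManageableNat f := by
  intro k
  -- the parameter type
  set P := (ℕ × (Fin k → ℕ)) × (ℕ × (Fin k → ℕ)) with hP
  -- digit extraction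
  let dg : (P × ℕ) → ℕ → Fin k → ℕ := fun a m i => m / (a.2 + 1) ^ (i : ℕ) % (a.2 + 1)
  -- the two linear forms evaluated at the digits of m
  let v1 : (P × ℕ) → ℕ → ℕ := fun a m => a.1.1.1 + ∑ i, dg a m i * a.1.1.2 i
  let v2 : (P × ℕ) → ℕ → ℕ := fun a m => a.1.2.1 + ∑ i, dg a m i * a.1.2.2 i
  let chk : (P × ℕ) → ℕ → Bool := fun a m => decide (f (v1 a m) < v2 a m)
  let G : (P × ℕ) → Bool := fun a =>
    Nat.rec (motive := fun _ => Bool) false (fun m b => b || chk a m) ((a.2 + 1) ^ k)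
  let dec : P → Bool := fun p => G (p, nK (p.2.1 + ∑ i, p.2.2 i))
  refine ⟨dec, ?_, ?_⟩
  · -- computability
    have hv1 : Primrec fun q : (P × ℕ) × ℕ => v1 q.1 q.2 := by
      refine Primrec.nat_add.comp
        (Primrec.fst.comp <| Primrec.fst.comp <| Primrec.fst.comp Primrec.fst) ?_
      refine primrec_finsum fun i => ?_
      have hdg : Primrec fun q : (P × ℕ) × ℕ => dg q.1 q.2 i := by
        have hb : Primrec fun q : (P × ℕ) × ℕ => q.1.2 + 1 :=
          Primrec.succ.comp (Primrec.snd.comp Primrec.fst)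
        exact Primrec.nat_mod.comp
          (Primrec.nat_div.comp Primrec.snd ((primrec_pow_const (i : ℕ)).comp hb)) hb
      exact Primrec.nat_mul.comp hdg
        (Primrec.fin_app.comp
          (Primrec.snd.comp <| Primrec.fst.comp <| Primrec.fst.comp Primrec.fst)
          (Primrec.const i))
    have hv2 : Primrec fun q : (P × ℕ) × ℕ => v2 q.1 q.2 := by
      refine Primrec.nat_add.comp
        (Primrec.fst.comp <| Primrec.snd.comp <| Primrec.fst.comp Primrec.fst) ?_
      refine primrec_finsum fun i => ?_
      have hdg : Primrec fun q : (P × ℕ) × ℕ => dg q.1 q.2 i := by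
        have hb : Primrec fun q : (P × ℕ) × ℕ => q.1.2 + 1 :=
          Primrec.succ.comp (Primrec.snd.comp Primrec.fst)
        exact Primrec.nat_mod.comp
          (Primrec.nat_div.comp Primrec.snd ((primrec_pow_const (i : ℕ)).comp hb)) hb
      exact Primrec.nat_mul.comp hdg
        (Primrec.fin_app.comp
          (Primrec.snd.comp <| Primrec.snd.comp <| Primrec.fst.comp Primrec.fst)
          (Primrec.const i))
    have hchk : Computable₂ chk := by
      have hlt : Primrec fun r : ℕ × ℕ => decide (r.1 < r.2) := Primrec.nat_lt.decide
      exact (hlt.to_comp.comp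
        ((hf.comp hv1.to_comp).pair hv2.to_comp)).of_eq fun q => rfl
    have hG : Computable G := by
      have hpow : Computable fun a : P × ℕ => (a.2 + 1) ^ k :=
        ((primrec_pow_const k).comp (Primrec.succ.comp Primrec.snd)).to_comp
      have hor : Computable₂ (fun b1 b2 : Bool => b1 || b2) := Primrec.or.to_comp
      have hcomb : Computable fun q : (P × ℕ) × (ℕ × Bool) => q.2.2 || chk q.1 q.2.1 :=
        hor.comp (Computable.snd.comp Computable.snd)
          (hchk.comp Computable.fst (Computable.fst.comp Computable.snd))
      have hh : Computable₂ fun (a : P × ℕ) (y : ℕ × Bool) => y.2 || chk a y.1 :=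
        hcomb.to₂
      exact (Computable.nat_rec hpow (Computable.const false) hh).of_eq fun a => rfl
    have hC : Computable fun p : P => p.2.1 + ∑ i, p.2.2 i := by
      refine (Primrec.nat_add.comp (Primrec.fst.comp Primrec.snd) ?_).to_comp
      exact primrec_finsum fun i =>
        Primrec.fin_app.comp (Primrec.snd.comp Primrec.snd) (Primrec.const i)
    exact hG.comp (Computable.id.pair (hnK.comp hC))
  · -- correctness
    intro A₀ A B₀ B hA₀ hA
    set C := B₀ + ∑ i, B i with hc
    set N := nK C with hN
    set a : P × ℕ := (((A₀, A), (B₀, B)), N) with ha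
    have hdec : dec ((A₀, A), (B₀, B)) = G a := rfl
    rw [hdec]
    have hiff := natrec_or_eq_true (chk a) ((N + 1) ^ k)
    constructor
    · intro hd
      obtain ⟨m, _, hcm⟩ := (hiff.1 hd)
      exact ⟨dg a m, by simpa [chk, v1, v2] using of_decide_eq_true hcm⟩
    · rintro ⟨x, hx⟩
      -- first show the witness is bounded: ∀ i, x i ≤ N
      have hbdd : ∀ i, x i < N + 1 := by
        intro i
        by_contra hcon
        push_neg at hcon
        have hxi : N + 1 ≤ x i := hcon
        set n := A₀ + ∑ j, x j * A j with hn
        have hterm : ∀ j, x j * A j ≤ n := fun j =>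
          le_trans
            (Finset.single_le_sum (f := fun j => x j * A j) (fun j _ => Nat.zero_le _)
              (Finset.mem_univ j))
            (Nat.le_add_left _ _)
        have hnN : nK C ≤ n := by
          have : x i ≤ x i * A i := Nat.le_mul_of_pos_right _ (hA i)
          have := le_trans this (hterm i)
          omega
        have hfn : C * n ≤ f n := h C n hnN
        have hCn : B₀ + ∑ j, x j * B j ≤ C * n := by
          have h1 : B₀ ≤ B₀ * n := Nat.le_mul_of_pos_right _ (by positivity)
          have h2 : ∀ j : Fin k, x j * B j ≤ B j * n := by
            intro j
            calc x j * B j ≤ (x j * A j) * B j :=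
                  Nat.mul_le_mul_right _ (Nat.le_mul_of_pos_right _ (hA j))
              _ ≤ n * B j := Nat.mul_le_mul_right _ (hterm j)
              _ = B j * n := Nat.mul_comm _ _
          calc B₀ + ∑ j, x j * B j ≤ B₀ * n + ∑ j, B j * n :=
                Nat.add_le_add h1 (Finset.sum_le_sum fun j _ => h2 j)
            _ = (B₀ + ∑ j, B j) * n := by rw [Nat.add_mul, Finset.sum_mul]
            _ = C * n := by rw [hc]
        exact absurd hx (by omega)
      -- encode the bounded witness as a number m < (N+1)^k
      obtain ⟨hmlt, hdig⟩ := digits_lemma (N + 1) (Nat.succ_pos N) x hbdd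
      refine hiff.2 ⟨∑ j, x j * (N + 1) ^ (j : ℕ), hmlt, ?_⟩
      have hdg_eq : dg a (∑ j, x j * (N + 1) ^ (j : ℕ)) = x := funext fun i => hdig i
      simp only [chk, v1, v2, hdg_eq]
      exact decide_eq_true hx
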